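/- Let g, h, y be three positive locally integrable functions on (t₀, ∞) such that y' ≤ g·y + h for t ≥ t₀, and suppose for some r > 0 and all t ≥ t₀ we have ∫_t^{t+r} g ≤ a₁, ∫_t^{t+r} h ≤ a₂, ∫_t^{t+r} y ≤ a₃. Then y(t + r) ≤ (a₃/r + a₂)·exp(a₁) for all t ≥ t₀. -/

import Mathlib

open MeasureTheory intervalIntegral Set

/-- Variable-coefficient Grönwall inequality on an interval `[s, b]`. -/
lemma gronwall_var (s b A₁ A₂ : ℝ) (hsb : s ≤ b)
    (g h y y' : ℝ → ℝ)
    (hys : 0 ≤ y s) (hA₂ : 0 ≤ A₂)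
    (hg0 : ∀ x ∈ Set.Ioc s b, 0 ≤ g x)
    (hh0 : ∀ x ∈ Set.Ioo s b, 0 ≤ h x)
    (hderiv : ∀ x ∈ Set.Icc s b, HasDerivAt y (y' x) x)
    (hineq : ∀ x ∈ Set.Ioo s b, y' x ≤ g x * y x + h x)
    (hgi : IntegrableOn g (Set.Icc s b))
    (hhi : IntegrableOn h (Set.Icc s b))
    (hga : (∫ x in s..b, g x) ≤ A₁)
    (hha : (∫ x in s..b, h x) ≤ A₂) :
    y b ≤ (y s + A₂) * Real.exp A₁ := by
  have hyc : ContinuousOn y (Set.Icc s b) := fun x hx =>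
    (hderiv x hx).continuousAt.continuousWithinAt
  obtain ⟨M₀, hM₀⟩ := isCompact_Icc.exists_bound_of_continuousOn hyc
  set M : ℝ := max M₀ 0 with hMdef
  have hM : ∀ x ∈ Set.Icc s b, |y x| ≤ M := fun x hx =>
    (hM₀ x hx).trans (le_max_left _ _)
  have hM0 : 0 ≤ M := le_max_right _ _
  have key : ∀ ε : ℝ, 0 < ε → y b ≤ (y s + A₂ + M * ε) * Real.exp (A₁ + ε) := by
    intro ε hε
    set f : ℝ → ℝ := (Set.Ioc s b).indicator g with hfdef
    have hgI : IntegrableOn g (Set.Ioc s b) := hgi.mono_set Set.Ioc_subset_Icc_self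
    have hf : Integrable f volume := hgI.integrable_indicator measurableSet_Ioc
    have hf0 : ∀ x, 0 ≤ f x := by
      intro x
      by_cases hx : x ∈ Set.Ioc s b
      · simpa [hfdef, Set.indicator_of_mem hx] using hg0 x hx
      · simp [hfdef, Set.indicator_of_notMem hx]
    obtain ⟨g₁, hg₁s, hg₁ε, hg₁c, hg₁i⟩ := hf.exists_hasCompactSupport_integral_sub_le hε
    set gc : ℝ → ℝ := fun x => |g₁ x| with hgcdef
    have hgcc : Continuous gc := hg₁c.abs
    have hgc0 : ∀ x, 0 ≤ gc x := fun x => abs_nonneg _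
    have hgcs : HasCompactSupport gc := hg₁s.comp_left (g := abs) abs_zero
    have hgcint : Integrable gc volume := hgcc.integrable_of_hasCompactSupport hgcs
    have hptwise : ∀ x, |f x - gc x| ≤ |f x - g₁ x| := by
      intro x
      rcases le_or_gt 0 (g₁ x) with hx | hx
      · rw [hgcdef]; simp [abs_of_nonneg hx]
      · have h1 : gc x = -g₁ x := abs_of_neg hx
        have h2 := hf0 x
        rw [h1, abs_le]
        cases abs_cases (f x - g₁ x) <;> constructor <;> nlinarith [abs_nonneg (f x - g₁ x), le_abs_self (f x - g₁ x)]
    have hsubint : Integrable (fun x => |f x - gc x|) volume := (hf.sub hgcint).abs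
    have hest : (∫ x in s..b, |g x - gc x|) ≤ ε := by
      have e1 : (∫ x in s..b, |g x - gc x|) = ∫ x in Set.Ioc s b, |f x - gc x| := by
        rw [intervalIntegral.integral_of_le hsb]
        apply MeasureTheory.setIntegral_congr_fun measurableSet_Ioc
        intro x hx
        simp only [hfdef, Set.indicator_of_mem hx]
      rw [e1]
      calc ∫ x in Set.Ioc s b, |f x - gc x|
          ≤ ∫ x, |f x - gc x| := by
            apply MeasureTheory.setIntegral_le_integral hsubint
            filter_upwards with x using abs_nonneg _
        _ ≤ ∫ x, |f x - g₁ x| :=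
            MeasureTheory.integral_mono hsubint (hf.sub hg₁i).abs hptwise
        _ ≤ ε := by simpa [Real.norm_eq_abs] using hg₁ε
    have hgcII : IntervalIntegrable gc volume s b := hgcc.intervalIntegrable s b
    have hgII : IntervalIntegrable g volume s b :=
      (intervalIntegrable_iff_integrableOn_Ioc_of_le hsb).2 hgI
    have hhII : IntervalIntegrable h volume s b :=
      (intervalIntegrable_iff_integrableOn_Ioc_of_le hsb).2 (hhi.mono_set Set.Ioc_subset_Icc_self)
    have hdiffII : IntervalIntegrable (fun x => |g x - gc x|) volume s b := (hgII.sub hgcII).abs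
    set G : ℝ → ℝ := fun τ => ∫ x in s..τ, gc x with hGdef
    have hG : ∀ τ, HasDerivAt G (gc τ) τ := fun τ =>
      intervalIntegral.integral_hasDerivAt_right (hgcc.intervalIntegrable s τ)
        (hgcc.stronglyMeasurableAtFilter _ _) hgcc.continuousAt
    have hGcont : Continuous G := continuous_iff_continuousAt.2 fun τ => (hG τ).continuousAt
    have hG0 : ∀ τ, s ≤ τ → 0 ≤ G τ := fun τ hτ =>
      intervalIntegral.integral_nonneg hτ fun x _ => hgc0 x
    have hGb : G b ≤ A₁ + ε := by
      have e1 : G b = (∫ x in s..b, g x) + ∫ x in s..b, (gc x - g x) := by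
        rw [← intervalIntegral.integral_add hgII (hgcII.sub hgII)]
        simp [hGdef]
      have e2 : (∫ x in s..b, (gc x - g x)) ≤ ∫ x in s..b, |g x - gc x| := by
        apply intervalIntegral.integral_mono_on hsb (hgcII.sub hgII) hdiffII
        intro x _
        rw [abs_sub_comm]
        exact le_abs_self _
      linarith
    set F : ℝ → ℝ := fun τ => y τ * Real.exp (-G τ) with hFdef
    set φ : ℝ → ℝ := fun x => h x + M * |g x - gc x| with hφdef
    have hφint : IntegrableOn φ (Set.Icc s b) :=
      hhi.add (((hgi.sub hgcint.integrableOn).abs).const_mul M)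
    have Fcont : ContinuousOn F (Set.Icc s b) :=
      hyc.mul (Real.continuous_exp.comp hGcont.neg).continuousOn
    have Fderiv : ∀ x ∈ Set.Ioo s b,
        HasDerivWithinAt F ((y' x - gc x * y x) * Real.exp (-G x)) (Set.Ioi x) x := by
      intro x hx
      have hx' : x ∈ Set.Icc s b := Set.Ioo_subset_Icc_self hx
      have h1 : HasDerivAt (fun τ => Real.exp (-G τ)) (Real.exp (-G x) * (-gc x)) x :=
        ((hG x).neg).exp
      have h2 := (hderiv x hx').mul h1
      have : HasDerivAt F (y' x * Real.exp (-G x) + y x * (Real.exp (-G x) * -gc x)) x := h2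
      exact this.hasDerivWithinAt.congr_deriv (by ring)
    have Fbound : ∀ x ∈ Set.Ioo s b, (y' x - gc x * y x) * Real.exp (-G x) ≤ φ x := by
      intro x hx
      have hx' : x ∈ Set.Icc s b := Set.Ioo_subset_Icc_self hx
      have e1 : Real.exp (-G x) ≤ 1 := by
        rw [Real.exp_le_one_iff]
        linarith [hG0 x hx.1.le]
      have habs : (g x - gc x) * y x ≤ |g x - gc x| * M :=
        calc (g x - gc x) * y x ≤ |(g x - gc x) * y x| := le_abs_self _
          _ = |g x - gc x| * |y x| := abs_mul _ _
          _ ≤ |g x - gc x| * M := mul_le_mul_of_nonneg_left (hM x hx') (abs_nonneg _)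
      have e2 : y' x - gc x * y x ≤ φ x := by
        have h3 := hineq x hx
        have : φ x = h x + M * |g x - gc x| := rfl
        nlinarith [habs]
      have e3 : 0 ≤ φ x := add_nonneg (hh0 x hx) (mul_nonneg hM0 (abs_nonneg _))
      have e4 : (0:ℝ) < Real.exp (-G x) := Real.exp_pos _
      nlinarith [mul_le_mul_of_nonneg_right e2 e4.le, mul_le_mul_of_nonneg_left e1 e3]
    have main := intervalIntegral.sub_le_integral_of_hasDeriv_right_of_le hsb Fcont Fderiv hφint Fbound
    have hFs : F s = y s := by simp [hFdef, hGdef]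
    have hφeval : (∫ x in s..b, φ x) ≤ A₂ + M * ε := by
      have e5 : (∫ x in s..b, φ x)
          = (∫ x in s..b, h x) + M * ∫ x in s..b, |g x - gc x| := by
        rw [hφdef]
        rw [intervalIntegral.integral_add hhII (hdiffII.const_mul M),
          intervalIntegral.integral_const_mul]
      have e6 := mul_le_mul_of_nonneg_left hest hM0
      linarith
    have hFb : F b ≤ y s + A₂ + M * ε := by
      rw [hFs] at main
      linarith
    have hyb : y b = F b * Real.exp (G b) := by
      rw [hFdef]
      simp only
      rw [mul_assoc, ← Real.exp_add]
      simp
    rw [hyb]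
    have hnn : 0 ≤ y s + A₂ + M * ε := by positivity
    calc F b * Real.exp (G b) ≤ (y s + A₂ + M * ε) * Real.exp (G b) :=
          mul_le_mul_of_nonneg_right hFb (Real.exp_pos _).le
      _ ≤ (y s + A₂ + M * ε) * Real.exp (A₁ + ε) :=
          mul_le_mul_of_nonneg_left (Real.exp_le_exp.2 hGb) hnn
  have cont : Filter.Tendsto (fun ε : ℝ => (y s + A₂ + M * ε) * Real.exp (A₁ + ε))
      (nhdsWithin 0 (Set.Ioi 0)) (nhds ((y s + A₂ + M * 0) * Real.exp (A₁ + 0))) := by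
    apply Filter.Tendsto.mono_left _ nhdsWithin_le_nhds
    exact (Continuous.tendsto (by continuity) 0)
  have := ge_of_tendsto cont
    (Filter.eventually_of_mem self_mem_nhdsWithin fun ε hε => key ε hε)
  simpa using this

/-- The Uniform Gronwall Lemma. -/
theorem uniform_gronwall
    (t₀ r a₁ a₂ a₃ : ℝ) (hr : 0 < r)
    (ha₁ : 0 < a₁) (ha₂ : 0 < a₂) (ha₃ : 0 < a₃)
    (g h y y' : ℝ → ℝ)
    (hg : ∀ t, t₀ < t → 0 ≤ g t)
    (hh : ∀ t, t₀ < t → 0 ≤ h t)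
    (hy : ∀ t, t₀ < t → 0 ≤ y t)
    (hderiv : ∀ t, t₀ ≤ t → HasDerivAt y (y' t) t)
    (hineq : ∀ t, t₀ ≤ t → y' t ≤ g t * y t + h t)
    (hgi : ∀ t, t₀ ≤ t → IntervalIntegrable g volume t (t + r))
    (hhi : ∀ t, t₀ ≤ t → IntervalIntegrable h volume t (t + r))
    (hyi : ∀ t, t₀ ≤ t → IntervalIntegrable y volume t (t + r))
    (hga : ∀ t, t₀ ≤ t → (∫ s in t..(t + r), g s) ≤ a₁)
    (hha : ∀ t, t₀ ≤ t → (∫ s in t..(t + r), h s) ≤ a₂)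
    (hya : ∀ t, t₀ ≤ t → (∫ s in t..(t + r), y s) ≤ a₃) :
    ∀ t, t₀ ≤ t → y (t + r) ≤ (a₃ / r + a₂) * Real.exp a₁ := by
  intro t ht
  have pointwise : ∀ s ∈ Set.Ioc t (t + r), y (t + r) ≤ (y s + a₂) * Real.exp a₁ := by
    intro s hs
    have hst₀ : t₀ < s := lt_of_le_of_lt ht hs.1
    have hs0 : t₀ ≤ s := hst₀.le
    have hsb : s ≤ t + r := hs.2
    have hbr : t + r ≤ s + r := by linarith [hs.1.le]
    have hsr : s ≤ s + r := by linarith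
    have hgIoc : IntegrableOn g (Set.Ioc s (s + r)) :=
      (intervalIntegrable_iff_integrableOn_Ioc_of_le hsr).1 (hgi s hs0)
    have hhIoc : IntegrableOn h (Set.Ioc s (s + r)) :=
      (intervalIntegrable_iff_integrableOn_Ioc_of_le hsr).1 (hhi s hs0)
    have hgIcc : IntegrableOn g (Set.Icc s (t + r)) := by
      rw [integrableOn_Icc_iff_integrableOn_Ioc]
      exact hgIoc.mono_set (Set.Ioc_subset_Ioc le_rfl hbr)
    have hhIcc : IntegrableOn h (Set.Icc s (t + r)) := by
      rw [integrableOn_Icc_iff_integrableOn_Ioc]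
      exact hhIoc.mono_set (Set.Ioc_subset_Ioc le_rfl hbr)
    have hgae : 0 ≤ᵐ[volume.restrict (Set.Ioc s (s + r))] g :=
      (ae_restrict_mem measurableSet_Ioc).mono fun x hx => hg x (lt_trans hst₀ hx.1)
    have hhae : 0 ≤ᵐ[volume.restrict (Set.Ioc s (s + r))] h :=
      (ae_restrict_mem measurableSet_Ioc).mono fun x hx => hh x (lt_trans hst₀ hx.1)
    have hga' : (∫ x in s..(t + r), g x) ≤ a₁ :=
      le_trans (intervalIntegral.integral_mono_interval le_rfl hsb hbr hgae (hgi s hs0))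
        (hga s hs0)
    have hha' : (∫ x in s..(t + r), h x) ≤ a₂ :=
      le_trans (intervalIntegral.integral_mono_interval le_rfl hsb hbr hhae (hhi s hs0))
        (hha s hs0)
    exact gronwall_var s (t + r) a₁ a₂ hsb g h y y' (hy s hst₀) ha₂.le
      (fun x hx => hg x (lt_trans hst₀ hx.1))
      (fun x hx => hh x (lt_trans hst₀ hx.1))
      (fun x hx => hderiv x (le_trans hs0 hx.1))
      (fun x hx => hineq x (le_trans hs0 hx.1.le))
      hgIcc hhIcc hga' hha'
  have htr : t ≤ t + r := by linarith
  have hint1 : IntervalIntegrable (fun s => (y s + a₂) * Real.exp a₁) volume t (t + r) :=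
    ((hyi t ht).add intervalIntegrable_const).mul_const _
  have mono : (∫ _ in t..(t + r), y (t + r)) ≤
      ∫ s in t..(t + r), (y s + a₂) * Real.exp a₁ := by
    apply intervalIntegral.integral_mono_ae_restrict htr intervalIntegrable_const hint1
    have h1 : ∀ᵐ s ∂(volume.restrict (Set.Icc t (t + r))), s ≠ t := by
      apply ae_restrict_of_ae
      rw [ae_iff]
      simp [measure_singleton (α := ℝ) t]

    filter_upwards [h1, ae_restrict_mem measurableSet_Icc] with s hs1 hs2
    exact pointwise s ⟨lt_of_le_of_ne hs2.1 (Ne.symm hs1), hs2.2⟩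
  have lhs : (∫ _ in t..(t + r), y (t + r)) = r * y (t + r) := by
    rw [intervalIntegral.integral_const]
    simp [smul_eq_mul]
  have rhs : (∫ s in t..(t + r), (y s + a₂) * Real.exp a₁)
      = ((∫ s in t..(t + r), y s) + r * a₂) * Real.exp a₁ := by
    rw [intervalIntegral.integral_mul_const,
      intervalIntegral.integral_add (hyi t ht) intervalIntegrable_const,
      intervalIntegral.integral_const]
    simp [smul_eq_mul]
  rw [lhs, rhs] at mono
  have h2 : r * y (t + r) ≤ (a₃ + r * a₂) * Real.exp a₁ := by
    have := hya t ht
    nlinarith [Real.exp_pos a₁]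
  rw [show a₃ / r + a₂ = (a₃ + r * a₂) / r by field_simp, div_mul_eq_mul_div,
    le_div_iff₀ hr]
  nlinarith [h2]
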